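/- (Theorem 2.1.) Let N be a natural number and let q_k ∈ ℂ[X] be given for each integer k with |k| ≤ N, and let Q = ∑_{k=0}^{N} S^k ∘ q_k(D) + ∑_{k=1}^{N} S'^k ∘ q_{−k}(D). Then Q commutes with the Szegő projector Π if and only if Q lies in the ℂ-subalgebra of End(V) generated by the three operators D, D∘S and S'∘D (i.e. Q ∈ Algebra.adjoin ℂ {D, D∘S, S'∘D}). In other words, the algebra of differential operators on S¹ commuting with Π is generated by (1/i)d/dθ, (1/i)(d/dθ)e^{iθ} and e^{−iθ}(1/i)d/dθ. -/

import Mathlib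

open Polynomial

local notation "V" => (ℤ →₀ ℂ)

/-- The operator `(1/i) d/dθ`: `D δ_m = m • δ_m`. -/
noncomputable def D : Module.End ℂ V :=
  Finsupp.lsum ℂ fun m => (m : ℂ) • Finsupp.lsingle m

/-- Multiplication by `e^{iθ}`, the up-shift: `S δ_m = δ_{m+1}`. -/
noncomputable def S : Module.End ℂ V :=
  Finsupp.lsum ℂ fun m => Finsupp.lsingle (m + 1)

/-- Multiplication by `e^{-iθ}`, the down-shift: `S' δ_m = δ_{m-1}`. -/
noncomputable def S' : Module.End ℂ V :=
  Finsupp.lsum ℂ fun m => Finsupp.lsingle (m - 1)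

/-- The Szegő projector: `Π δ_m = δ_m` for `m ≥ 0`, `Π δ_m = 0` for `m < 0`. -/
noncomputable def Szego : Module.End ℂ V :=
  Finsupp.lsum ℂ fun m => if 0 ≤ m then Finsupp.lsingle m else 0

lemma D_single (m : ℤ) (a : ℂ) : D (Finsupp.single m a) = (m:ℂ) • Finsupp.single m a := by
  simp only [D, Finsupp.lsum_single, LinearMap.smul_apply, Finsupp.lsingle_apply]

lemma S_single (m : ℤ) (a : ℂ) : S (Finsupp.single m a) = Finsupp.single (m+1) a := by
  simp only [S, Finsupp.lsum_single, Finsupp.lsingle_apply]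

lemma S'_single (m : ℤ) (a : ℂ) : S' (Finsupp.single m a) = Finsupp.single (m-1) a := by
  simp only [S', Finsupp.lsum_single, Finsupp.lsingle_apply]

lemma Szego_single (m : ℤ) (a : ℂ) :
    Szego (Finsupp.single m a) = if 0 ≤ m then Finsupp.single m a else 0 := by
  simp only [Szego, Finsupp.lsum_single]
  split <;> simp

lemma S_pow_single (k : ℕ) (m : ℤ) (a : ℂ) :
    (S ^ k) (Finsupp.single m a) = Finsupp.single (m + k) a := by
  induction k with
  | zero => simp
  | succ k ih =>
    rw [pow_succ', Module.End.mul_apply, ih, S_single]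
    congr 1
    push_cast; ring

lemma S'_pow_single (k : ℕ) (m : ℤ) (a : ℂ) :
    (S' ^ k) (Finsupp.single m a) = Finsupp.single (m - k) a := by
  induction k with
  | zero => simp
  | succ k ih =>
    rw [pow_succ', Module.End.mul_apply, ih, S'_single]
    congr 1
    push_cast; ring

lemma D_pow_single (n : ℕ) (m : ℤ) (a : ℂ) :
    (D ^ n) (Finsupp.single m a) = ((m:ℂ)^n) • Finsupp.single m a := by
  induction n with
  | zero => simp
  | succ n ih =>
    rw [pow_succ', Module.End.mul_apply, ih, map_smul, D_single, smul_smul]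
    rw [pow_succ, mul_comm]

lemma aeval_D_single (p : ℂ[X]) (m : ℤ) (a : ℂ) :
    (aeval D p) (Finsupp.single m a) = p.eval (m:ℂ) • Finsupp.single m a := by
  induction p using Polynomial.induction_on' with
  | add p r hp hr =>
    simp only [map_add, LinearMap.add_apply, hp, hr, eval_add, add_smul]
  | monomial n c =>
    simp only [aeval_monomial, eval_monomial, Module.End.mul_apply, D_pow_single]
    rw [map_smul, Module.algebraMap_end_apply, smul_smul, mul_comm]

lemma Szego_apply (f : V) (t : ℤ) : (Szego f) t = if 0 ≤ t then f t else 0 := by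
  induction f using Finsupp.induction_linear with
  | zero => simp
  | add f g hf hg => rw [map_add, Finsupp.add_apply, hf, hg]; split <;> simp
  | single m a =>
    rw [Szego_single]
    rcases le_or_gt 0 m with h0 | h0
    · rw [if_pos h0]
      rcases le_or_gt 0 t with h1 | h1
      · rw [if_pos h1]
      · rw [if_neg (not_le.2 h1), Finsupp.single_apply, if_neg (by omega)]
    · rw [if_neg (not_le.2 h0), Finsupp.coe_zero, Pi.zero_apply]
      rcases le_or_gt 0 t with h1 | h1
      · rw [if_pos h1, Finsupp.single_apply, if_neg (by omega)]
      · rw [if_neg (not_le.2 h1)]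

lemma DS_pow_single (k : ℕ) (m : ℤ) (a : ℂ) :
    ((D*S)^k) (Finsupp.single m a)
      = (∏ j ∈ Finset.range k, ((m:ℂ) + j + 1)) • Finsupp.single (m + k) a := by
  induction k with
  | zero => simp
  | succ k ih =>
    rw [pow_succ', Module.End.mul_apply, ih, map_smul, Module.End.mul_apply, S_single,
      D_single, smul_smul, Finset.prod_range_succ]
    congr 1
    · push_cast; ring
    · congr 1; push_cast; ring

lemma S'D_pow_single (k : ℕ) (m : ℤ) (a : ℂ) :
    ((S'*D)^k) (Finsupp.single m a)
      = (∏ j ∈ Finset.range k, ((m:ℂ) - j)) • Finsupp.single (m - k) a := by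
  induction k with
  | zero => simp
  | succ k ih =>
    rw [pow_succ', Module.End.mul_apply, ih, map_smul, Module.End.mul_apply, D_single,
      map_smul, S'_single, smul_smul, Finset.prod_range_succ]
    congr 1
    · push_cast; ring
    · congr 1; push_cast; ring

lemma DS_pow_eq (k : ℕ) :
    (D*S)^k = S^k * aeval D (∏ j ∈ Finset.range k, (X - C (-(j:ℂ)-1))) := by
  refine Finsupp.lhom_ext fun m a => ?_
  rw [DS_pow_single, Module.End.mul_apply, aeval_D_single, map_smul, S_pow_single]
  congr 1
  rw [eval_prod]
  refine Finset.prod_congr rfl fun j _ => ?_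
  simp only [eval_sub, eval_X, eval_C]
  ring

lemma S'D_pow_eq (k : ℕ) :
    (S'*D)^k = S'^k * aeval D (∏ j ∈ Finset.range k, (X - C (j:ℂ))) := by
  refine Finsupp.lhom_ext fun m a => ?_
  rw [S'D_pow_single, Module.End.mul_apply, aeval_D_single, map_smul, S'_pow_single]
  congr 1
  rw [eval_prod]
  refine Finset.prod_congr rfl fun j _ => ?_
  simp only [eval_sub, eval_X, eval_C]

lemma dvd_aux (r : ℕ → ℂ) (hr : Function.Injective r) (k : ℕ) (p : ℂ[X])
    (h : ∀ j, j < k → p.eval (r j) = 0) :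
    (∏ j ∈ Finset.range k, (X - C (r j))) ∣ p := by
  induction k generalizing p with
  | zero => simp
  | succ k ih =>
    obtain ⟨p', rfl⟩ : (X - C (r k)) ∣ p := dvd_iff_isRoot.2 (h k (by omega))
    rw [Finset.prod_range_succ, mul_comm]
    refine mul_dvd_mul_left _ (ih p' fun j hj => ?_)
    have hj' := h j (by omega)
    rw [eval_mul, eval_sub, eval_X, eval_C] at hj'
    rcases mul_eq_zero.1 hj' with hz | hz
    · exact absurd (hr (sub_eq_zero.1 hz)) (by omega)
    · exact hz

lemma comm_D : Commute D Szego := by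
  refine Finsupp.lhom_ext fun m a => ?_
  rw [Module.End.mul_apply, Module.End.mul_apply, Szego_single, D_single, map_smul,
    Szego_single]
  split
  · rw [D_single]
  · simp

lemma comm_DS : Commute (D * S) Szego := by
  refine Finsupp.lhom_ext fun m a => ?_
  have h1 : (D * S * Szego) (Finsupp.single m a)
      = if 0 ≤ m then ((m:ℂ)+1) • Finsupp.single (m+1) a else 0 := by
    rw [Module.End.mul_apply, Szego_single]
    split
    · rw [Module.End.mul_apply, S_single, D_single]
      congr 1; push_cast; ring
    · simp
  have h2 : (Szego * (D * S)) (Finsupp.single m a)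
      = if 0 ≤ m + 1 then ((m:ℂ)+1) • Finsupp.single (m+1) a else 0 := by
    rw [Module.End.mul_apply, Module.End.mul_apply, S_single, D_single, map_smul,
      Szego_single, smul_ite, smul_zero]
    congr 2
    push_cast; ring
  rw [h1, h2]
  rcases lt_trichotomy m (-1) with h | h | h
  · rw [if_neg (by omega), if_neg (by omega)]
  · subst h
    rw [if_neg (by omega), if_pos (by omega)]
    norm_num
  · rw [if_pos (by omega), if_pos (by omega)]

lemma comm_S'D : Commute (S' * D) Szego := by
  refine Finsupp.lhom_ext fun m a => ?_
  have h1 : (S' * D * Szego) (Finsupp.single m a)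
      = if 0 ≤ m then (m:ℂ) • Finsupp.single (m-1) a else 0 := by
    rw [Module.End.mul_apply, Szego_single]
    split
    · rw [Module.End.mul_apply, D_single, map_smul, S'_single]
    · simp
  have h2 : (Szego * (S' * D)) (Finsupp.single m a)
      = if 0 ≤ m - 1 then (m:ℂ) • Finsupp.single (m-1) a else 0 := by
    rw [Module.End.mul_apply, Module.End.mul_apply, D_single, map_smul, S'_single,
      map_smul, Szego_single, smul_ite, smul_zero]
  rw [h1, h2]
  rcases lt_trichotomy m 0 with h | h | h
  · rw [if_neg (by omega), if_neg (by omega)]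
  · subst h
    rw [if_pos le_rfl, if_neg (by omega)]
    norm_num
  · rw [if_pos (by omega), if_pos (by omega)]

/-- Theorem 2.1: a differential operator
`Q = ∑_{k=0}^N S^k ∘ q_k(D) + ∑_{k=1}^N S'^k ∘ q_{-k}(D)` on `S¹` commutes with the
Szegő projector `Π` iff it lies in the algebra generated by `(1/i)d/dθ`,
`(1/i)(d/dθ)e^{iθ}` and `e^{-iθ}(1/i)d/dθ`, i.e. by `D`, `D∘S` and `S'∘D`. -/
theorem statement3 (N : ℕ) (q : ℤ → ℂ[X]) (Q : Module.End ℂ V)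
    (hQ : Q = ∑ k ∈ Finset.range (N + 1), S ^ k * Polynomial.aeval D (q (k : ℤ))
        + ∑ k ∈ Finset.Icc 1 N, S' ^ k * Polynomial.aeval D (q (-(k : ℤ)))) :
    Commute Q Szego ↔ Q ∈ Algebra.adjoin ℂ ({D, D * S, S' * D} : Set (Module.End ℂ V)) := by
  constructor
  · intro hcomm
    have hQs : ∀ m : ℤ, Q (Finsupp.single m 1) =
        (∑ k ∈ Finset.range (N+1), (q (k:ℤ)).eval (m:ℂ) • Finsupp.single (m + k) (1:ℂ))
        + (∑ k ∈ Finset.Icc 1 N, (q (-(k:ℤ))).eval (m:ℂ) • Finsupp.single (m - k) (1:ℂ)) := by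
      intro m
      rw [hQ]
      simp only [LinearMap.add_apply, LinearMap.coe_sum, Finset.sum_apply,
        Module.End.mul_apply, aeval_D_single, map_smul, S_pow_single, S'_pow_single]
    have hcoeff : ∀ m t : ℤ, (Q (Finsupp.single m 1)) t =
        (∑ k ∈ Finset.range (N+1), if m + k = t then (q (k:ℤ)).eval (m:ℂ) else 0)
        + (∑ k ∈ Finset.Icc 1 N, if m - k = t then (q (-(k:ℤ))).eval (m:ℂ) else 0) := by
      intro m t
      rw [hQs, Finsupp.add_apply, Finsupp.finset_sum_apply, Finsupp.finset_sum_apply]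
      congr 1 <;>
        refine Finset.sum_congr rfl fun k _ => ?_ <;>
        rw [Finsupp.smul_apply, Finsupp.single_apply] <;> split <;> simp
    have key : ∀ m t : ℤ, (if 0 ≤ t then (Q (Finsupp.single m 1)) t else 0)
        = if 0 ≤ m then (Q (Finsupp.single m 1)) t else 0 := by
      intro m t
      have h := congrArg (fun f : Module.End ℂ V => (f (Finsupp.single m 1)) t) hcomm.eq
      simp only [Module.End.mul_apply] at h
      rw [Szego_single, apply_ite Q, map_zero, Szego_apply] at h
      simp only [apply_ite (fun g : V => g t), Finsupp.coe_zero, Pi.zero_apply] at h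
      exact h.symm
    have hvup : ∀ k : ℕ, k ≤ N → ∀ j : ℕ, j < k → (q (k:ℤ)).eval (-(j:ℂ)-1) = 0 := by
      intro k hk j hj
      have hm : ∃ m : ℤ, m = -(j:ℤ)-1 := ⟨_, rfl⟩
      obtain ⟨m, hm⟩ := hm
      have h := key m (m + k)
      rw [if_pos (by omega), if_neg (by omega), hcoeff] at h
      have hB : ∑ k' ∈ Finset.Icc 1 N,
          (if m - k' = m + k then (q (-(k':ℤ))).eval (m:ℂ) else 0) = 0 :=
        Finset.sum_eq_zero fun k' hk' => if_neg (by rw [Finset.mem_Icc] at hk'; omega)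
      have hA : ∑ k' ∈ Finset.range (N+1),
          (if m + k' = m + k then (q (k':ℤ)).eval (m:ℂ) else 0) = (q (k:ℤ)).eval (m:ℂ) := by
        have hco : ∀ k' ∈ Finset.range (N+1),
            (if m + (k':ℤ) = m + k then (q (k':ℤ)).eval (m:ℂ) else 0)
            = (if k' = k then (q (k':ℤ)).eval (m:ℂ) else 0) :=
          fun k' _ => if_congr (by omega) rfl rfl
        rw [Finset.sum_congr rfl hco, Finset.sum_ite_eq']
        exact if_pos (Finset.mem_range.2 (by omega))
      rw [hA, hB, add_zero] at h
      have hcast : ((m:ℤ):ℂ) = -(j:ℂ)-1 := by rw [hm]; push_cast; ring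
      rw [← hcast]
      exact h
    have hvdown : ∀ k : ℕ, 1 ≤ k → k ≤ N → ∀ j : ℕ, j < k →
        (q (-(k:ℤ))).eval ((j:ℂ)) = 0 := by
      intro k hk1 hk2 j hj
      have hm : ∃ m : ℤ, m = (j:ℤ) := ⟨_, rfl⟩
      obtain ⟨m, hm⟩ := hm
      have h := key m (m - k)
      rw [if_neg (by omega), if_pos (by omega), hcoeff] at h
      have hA : ∑ k' ∈ Finset.range (N+1),
          (if m + k' = m - k then (q (k':ℤ)).eval (m:ℂ) else 0) = 0 :=
        Finset.sum_eq_zero fun k' hk' => if_neg (by omega)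
      have hB : ∑ k' ∈ Finset.Icc 1 N,
          (if m - k' = m - k then (q (-(k':ℤ))).eval (m:ℂ) else 0)
          = (q (-(k:ℤ))).eval (m:ℂ) := by
        have hco : ∀ k' ∈ Finset.Icc 1 N,
            (if m - (k':ℤ) = m - k then (q (-(k':ℤ))).eval (m:ℂ) else 0)
            = (if k' = k then (q (-(k':ℤ))).eval (m:ℂ) else 0) :=
          fun k' _ => if_congr (by omega) rfl rfl
        rw [Finset.sum_congr rfl hco, Finset.sum_ite_eq']
        exact if_pos (Finset.mem_Icc.2 ⟨hk1, hk2⟩)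
      rw [hA, hB, zero_add] at h
      have hcast : ((m:ℤ):ℂ) = (j:ℂ) := by rw [hm]; push_cast; ring
      rw [← hcast]
      exact h.symm
    have haeval : ∀ r : ℂ[X],
        aeval D r ∈ Algebra.adjoin ℂ ({D, D*S, S'*D} : Set (Module.End ℂ V)) := by
      intro r
      have h1 : aeval D r ∈ Algebra.adjoin ℂ ({D} : Set (Module.End ℂ V)) := by
        rw [Algebra.adjoin_singleton_eq_range_aeval]
        exact ⟨r, rfl⟩
      exact Algebra.adjoin_mono (by
        intro x hx
        rw [Set.mem_singleton_iff] at hx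
        subst hx
        exact Set.mem_insert _ _) h1
    rw [hQ]
    refine Subalgebra.add_mem _ (Subalgebra.sum_mem _ fun k hk => ?_)
      (Subalgebra.sum_mem _ fun k hk => ?_)
    · rw [Finset.mem_range] at hk
      obtain ⟨r, hr⟩ := dvd_aux (fun j => -(j:ℂ)-1)
        (fun i j h => Nat.cast_inj.mp (by linear_combination (-1:ℂ) * h)) k (q (k:ℤ))
        (fun j hj => hvup k (by omega) j hj)
      have heq : S^k * aeval D (q (k:ℤ)) = (D*S)^k * aeval D r := by
        rw [hr, map_mul, ← mul_assoc, ← DS_pow_eq]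
      rw [heq]
      exact mul_mem (pow_mem (Algebra.subset_adjoin (by simp)) k) (haeval r)
    · rw [Finset.mem_Icc] at hk
      obtain ⟨r, hr⟩ := dvd_aux (fun j => (j:ℂ)) (fun i j h => Nat.cast_inj.mp h)
        k (q (-(k:ℤ))) (fun j hj => hvdown k hk.1 hk.2 j hj)
      have heq : S'^k * aeval D (q (-(k:ℤ))) = (S'*D)^k * aeval D r := by
        rw [hr, map_mul, ← mul_assoc, ← S'D_pow_eq]
      rw [heq]
      exact mul_mem (pow_mem (Algebra.subset_adjoin (by simp)) k) (haeval r)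
  · intro hmem
    have hle : Algebra.adjoin ℂ ({D, D*S, S'*D} : Set (Module.End ℂ V))
        ≤ Subalgebra.centralizer ℂ {Szego} := by
      rw [Algebra.adjoin_le_iff]
      rintro x hx
      rw [SetLike.mem_coe, Subalgebra.mem_centralizer_iff]
      rintro g hg
      rw [Set.mem_singleton_iff] at hg
      subst hg
      simp only [Set.mem_insert_iff, Set.mem_singleton_iff] at hx
      rcases hx with rfl | rfl | rfl
      · exact comm_D.symm.eq
      · exact comm_DS.symm.eq
      · exact comm_S'D.symm.eq
    have hc := hle hmem
    rw [Subalgebra.mem_centralizer_iff] at hc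
    exact (hc Szego (Set.mem_singleton _)).symm
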